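/- The 7×7 matrix over the sixth roots of unity given by M = [[-1,1,1,1,1,1,1],[1,-ω,1,ω,ω²,ω,1],[1,1,-ω,1,ω,ω²,ω],[1,ω,1,-ω,1,ω,ω²],[1,ω²,ω,1,-ω,1,ω],[1,ω,ω²,ω,1,-ω,1],[1,1,ω,ω²,ω,1,-ω]], where ω is a primitive cube root of unity, satisfies M·M* = 7·I₇. -/

import Mathlib

lemma cons_val_five' {α : Type*} {m : ℕ} (x : α) (u : Fin (m + 5) → α) :
    Matrix.vecCons x u 5 =
      Matrix.vecHead (Matrix.vecTail (Matrix.vecTail (Matrix.vecTail (Matrix.vecTail u)))) :=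
  rfl

lemma cons_val_six' {α : Type*} {m : ℕ} (x : α) (u : Fin (m + 6) → α) :
    Matrix.vecCons x u 6 =
      Matrix.vecHead (Matrix.vecTail (Matrix.vecTail (Matrix.vecTail (Matrix.vecTail
        (Matrix.vecTail u))))) :=
  rfl

set_option maxHeartbeats 2000000 in
theorem stmt_9 (ω : ℂ) (h3 : ω ^ 3 = 1) (hsum : 1 + ω + ω ^ 2 = 0) :
    let M : Matrix (Fin 7) (Fin 7) ℂ :=
      !![-1, 1, 1, 1, 1, 1, 1;
         1, -ω, 1, ω, ω ^ 2, ω, 1;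
         1, 1, -ω, 1, ω, ω ^ 2, ω;
         1, ω, 1, -ω, 1, ω, ω ^ 2;
         1, ω ^ 2, ω, 1, -ω, 1, ω;
         1, ω, ω ^ 2, ω, 1, -ω, 1;
         1, 1, ω, ω ^ 2, ω, 1, -ω]
    M * M.conjTranspose = (7 : ℂ) • (1 : Matrix (Fin 7) (Fin 7) ℂ) := by
  intro M
  have h0 : ω ≠ 0 := by intro h; simp [h] at h3
  have habs : ‖ω‖ = 1 := by
    have h := congrArg (fun z : ℂ => ‖z‖) h3
    simp [map_pow] at h
    nlinarith [norm_nonneg ω, sq_nonneg (‖ω‖ - 1), sq_nonneg (‖ω‖ + 1)]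
  have hmul : (starRingEnd ℂ) ω * ω = 1 := by
    rw [mul_comm, Complex.mul_conj]
    rw [← Complex.sq_norm, habs]; norm_num
  have hstar : (starRingEnd ℂ) ω = ω ^ 2 := by
    have h2 : (starRingEnd ℂ) ω * ω = ω ^ 2 * ω := by
      rw [hmul]; linear_combination -h3
    exact mul_right_cancel₀ h0 h2
  have h4 : ω ^ 4 = ω := by linear_combination ω * h3
  have h5 : ω ^ 5 = ω ^ 2 := by linear_combination ω ^ 2 * h3
  have h6 : ω ^ 6 = 1 := by linear_combination (ω ^ 3 + 1) * h3
  have key : ∀ i j, (M * M.conjTranspose) i j = ((7 : ℂ) • (1 : Matrix (Fin 7) (Fin 7) ℂ)) i j := by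
    intro i j
    rw [Matrix.mul_apply, Fin.sum_univ_succ, Fin.sum_univ_succ, Fin.sum_univ_succ,
      Fin.sum_univ_succ, Fin.sum_univ_succ, Fin.sum_univ_succ, Fin.sum_univ_succ,
      Fin.sum_univ_zero]
    fin_cases i <;> fin_cases j <;>
      simp [M, Matrix.conjTranspose_apply, hstar, Matrix.one_apply, cons_val_five', cons_val_six',
        Matrix.vecHead, Matrix.vecTail] <;>
      ring_nf <;>
      (try simp only [h3, h4, h5, h6]) <;>
      first
        | ring1
        | linear_combination (-7 : ℂ) * hsum
        | linear_combination (-6 : ℂ) * hsum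
        | linear_combination (-5 : ℂ) * hsum
        | linear_combination (-4 : ℂ) * hsum
        | linear_combination (-3 : ℂ) * hsum
        | linear_combination (-2 : ℂ) * hsum
        | linear_combination (-1 : ℂ) * hsum
        | linear_combination (1 : ℂ) * hsum
        | linear_combination (2 : ℂ) * hsum
        | linear_combination (3 : ℂ) * hsum
        | linear_combination (4 : ℂ) * hsum
        | linear_combination (5 : ℂ) * hsum
        | linear_combination (6 : ℂ) * hsum
        | linear_combination (7 : ℂ) * hsum
  exact Matrix.ext key
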